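/- For partial n-place functions f, g, h₁,…,hₙ on A and any index i: (f ∘ᵢ g)[h₁…hₙ] = f[h₁ … hᵢ₋₁ g[h₁…hₙ] hᵢ₊₁ … hₙ]. -/

import Mathlib

/-- The type of partial `n`-place functions on `A`. -/
abbrev PFn (n : ℕ) (A : Type) := (Fin n → A) → Option A

/-- Menger superposition `f[g₁ … gₙ]`. -/
def Menger {n : ℕ} {A : Type} (f : PFn n A) (g : Fin n → PFn n A) : PFn n A :=
  fun a => if h : ∀ i, (g i a).isSome then f (fun i => (g i a).get (h i)) else none

/-- The `i`-th `n`-place projector `Iⁱ`. -/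
def proj {n : ℕ} {A : Type} (i : Fin n) : PFn n A := fun a => some (a i)

/-- The `i`-th Mann composition `f ∘ᵢ g`. -/
def mann {n : ℕ} {A : Type} (i : Fin n) (f g : PFn n A) : PFn n A :=
  fun a => (g a).bind fun b => f (Function.update a i b)

/-- Iterated Mann composition `f ∘ᵢ₁ g₁ ∘ᵢ₂ ⋯ ∘ᵢₛ gₛ` (left to right). -/
def iter {n : ℕ} {A : Type} (f : PFn n A) : List (Fin n × PFn n A) → PFn n A
  | [] => f
  | p :: l => iter (mann p.1 f p.2) l

/-- `μᵢ(∘ᵢ₁ … ∘ᵢₛ g₁ … gₛ)`. -/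
def mu {n : ℕ} {A : Type} (i : Fin n) : List (Fin n × PFn n A) → Option (PFn n A)
  | [] => none
  | p :: l => if p.1 = i then some (iter p.2 l) else mu i l

/-- `(f ∘ᵢ g)[h₁…hₙ] = f[h₁ … hᵢ₋₁ g[h₁…hₙ] hᵢ₊₁ … hₙ]`. -/
theorem mann_menger {n : ℕ} {A : Type} (i : Fin n) (f g : PFn n A)
    (h : Fin n → PFn n A) :
    Menger (mann i f g) h = Menger f (Function.update h i (Menger g h)) := by
  funext a
  simp only [Menger, mann]
  by_cases h1 : ∀ j, (h j a).isSome
  · simp only [dif_pos h1]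
    set b := fun j => (h j a).get (h1 j) with hb
    have hM : Menger g h a = g b := by simp [Menger, h1, hb]
    cases hg : g b with
    | none =>
      simp only [hg, Option.bind_none]
      rw [dif_neg]
      intro h2
      have := h2 i
      simp [hM, hg] at this
    | some c =>
      simp only [hg, Option.bind_some]
      have h2 : ∀ j, (Function.update h i (Menger g h) j a).isSome := by
        intro j
        by_cases hj : j = i
        · subst hj; simp [hM, hg]
        · simp [Function.update_of_ne hj, h1 j]
      rw [dif_pos h2]
      congr 1
      funext j
      by_cases hj : j = i
      · subst hj; simp [hM, hg]
      · simp [Function.update_of_ne hj, hb]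
  · rw [dif_neg h1, dif_neg]
    intro h2
    apply h1
    intro j
    by_cases hj : j = i
    · subst hj
      have := h2 j
      simp only [Function.update_self, Menger] at this
      split at this
      · exact ‹∀ k, (h k a).isSome› j
      · simp at this
    · have := h2 j
      simpa [Function.update_of_ne hj] using this
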